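/- Let SU(3) = {U ∈ M₃(ℂ) : U*U = I, det U = 1} and let K ⊆ SU(3) be the subgroup of matrices with all entries real (so K is a copy of SO(3)). Then the normalizer N of K in SU(3) is the union K ∪ ωK ∪ ω²K, where ω = e^{2πi/3}·I is the scalar matrix with entry a primitive cube root of unity; consequently the quotient group N/K is cyclic of order 3. -/

import Mathlib

open Matrix

/-- `SU(3)`: the subgroup of the unitary group `U(3)` of matrices of determinant one. -/
def SU3 : Subgroup (Matrix.unitaryGroup (Fin 3) ℂ) where
  carrier := {g | Matrix.det (g : Matrix (Fin 3) (Fin 3) ℂ) = 1}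
  one_mem' := by simp
  mul_mem' := by
    intro a b ha hb
    simp only [Set.mem_setOf_eq] at *
    rw [Matrix.UnitaryGroup.mul_val, Matrix.det_mul, ha, hb, mul_one]
  inv_mem' := by
    intro a ha
    simp only [Set.mem_setOf_eq] at *
    have h : ((a⁻¹ * a : Matrix.unitaryGroup (Fin 3) ℂ) : Matrix (Fin 3) (Fin 3) ℂ) = 1 := by
      rw [inv_mul_cancel]; rfl
    rw [Matrix.UnitaryGroup.mul_val] at h
    have := congrArg Matrix.det h
    rw [Matrix.det_mul, ha, mul_one, Matrix.det_one] at this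
    exact this

/-- A copy of `SO(3)` inside `SU(3)`: the subgroup of matrices with all entries real. -/
def K3 : Subgroup SU3 where
  carrier := {g | ∀ a b : Fin 3,
    (((g : Matrix.unitaryGroup (Fin 3) ℂ) : Matrix (Fin 3) (Fin 3) ℂ) a b).im = 0}
  one_mem' := by
    intro a b
    rcases eq_or_ne a b with h | h <;>
      simp [Matrix.one_apply, h]
  mul_mem' := by
    intro x y hx hy a b
    simp only [Set.mem_setOf_eq] at *
    show ((((x * y : SU3) : Matrix.unitaryGroup (Fin 3) ℂ) : Matrix (Fin 3) (Fin 3) ℂ) a b).im = 0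
    have hm : (((x * y : SU3) : Matrix.unitaryGroup (Fin 3) ℂ) : Matrix (Fin 3) (Fin 3) ℂ)
        = ((x : Matrix.unitaryGroup (Fin 3) ℂ) : Matrix (Fin 3) (Fin 3) ℂ)
          * ((y : Matrix.unitaryGroup (Fin 3) ℂ) : Matrix (Fin 3) (Fin 3) ℂ) := rfl
    rw [hm, Matrix.mul_apply, Complex.im_sum]
    refine Finset.sum_eq_zero fun c _ => ?_
    rw [Complex.mul_im, hx a c, hy c b]
    ring
  inv_mem' := by
    intro x hx a b
    simp only [Set.mem_setOf_eq] at *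
    have hm : (((x⁻¹ : SU3) : Matrix.unitaryGroup (Fin 3) ℂ) : Matrix (Fin 3) (Fin 3) ℂ)
        = star ((x : Matrix.unitaryGroup (Fin 3) ℂ) : Matrix (Fin 3) (Fin 3) ℂ) := rfl
    rw [hm, Matrix.star_apply]
    simp [hx b a]

----------------------------------------------------------------
-- auxiliary API
----------------------------------------------------------------

noncomputable def ω3 : ℂ := Complex.exp (2 * Real.pi * Complex.I / 3)

lemma omega_pow3 : ω3 ^ 3 = 1 := by
  rw [ω3, ← Complex.exp_nat_mul]
  norm_num
  rw [show (3:ℂ) * (2 * Real.pi * Complex.I / 3) = 2 * Real.pi * Complex.I by ring]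
  exact Complex.exp_two_pi_mul_I

lemma omega_ne_zero : ω3 ≠ 0 := Complex.exp_ne_zero _

lemma conj_omega_mul : (starRingEnd ℂ) ω3 * ω3 = 1 := by
  rw [ω3, ← Complex.exp_conj, ← Complex.exp_add]
  rw [show (starRingEnd ℂ) (2 * Real.pi * Complex.I / 3) + 2 * Real.pi * Complex.I / 3 = 0 by
    simp [Complex.conj_I, map_ofNat]; ring]
  exact Complex.exp_zero

lemma conj_omega : (starRingEnd ℂ) ω3 = ω3 ^ 2 := by
  apply mul_right_cancel₀ omega_ne_zero
  rw [conj_omega_mul, ← pow_succ, omega_pow3]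

lemma conj_omega_sq : (starRingEnd ℂ) (ω3 ^ 2) = ω3 := by
  rw [map_pow, conj_omega, ← pow_mul]
  rw [show (2 * 2 : ℕ) = 3 + 1 by norm_num, pow_succ, omega_pow3, one_mul]

lemma omega_im_ne : ω3.im ≠ 0 := by
  have him : ω3.im = Real.sin (2 * Real.pi / 3) := by
    rw [ω3, show 2 * (Real.pi:ℝ) * Complex.I / 3 = ((2 * Real.pi / 3 : ℝ) : ℂ) * Complex.I by
      push_cast; ring]
    exact Complex.exp_ofReal_mul_I_im _
  rw [him]
  have h := Real.pi_pos
  have : 0 < Real.sin (2 * Real.pi / 3) := by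
    apply Real.sin_pos_of_pos_of_lt_pi <;> nlinarith
  linarith

lemma cube_root_cases {l : ℂ} (h : l ^ 3 = 1) : l = 1 ∨ l = ω3 ∨ l = ω3 ^ 2 := by
  have h3 := omega_pow3
  have hsum : ω3 ^ 2 + ω3 + 1 = 0 := by
    have hz : (ω3 - 1) * (ω3 ^ 2 + ω3 + 1) = 0 := by ring_nf; linear_combination h3
    rcases mul_eq_zero.1 hz with h' | h'
    · exfalso
      have h1 : ω3 = 1 := by linear_combination h'
      exact omega_im_ne (by rw [h1]; simp)
    · exact h'
  have key : (l - 1) * ((l - ω3) * (l - ω3 ^ 2)) = 0 := by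
    linear_combination h - l^2 * hsum + l * hsum + (l - 1) * h3
  rcases mul_eq_zero.1 key with h' | h'
  · left; linear_combination h'
  rcases mul_eq_zero.1 h' with h'' | h''
  · right; left; linear_combination h''
  · right; right; linear_combination h''

----------------------------------------------------------------
-- matrix API for SU3
----------------------------------------------------------------

def mm (g : SU3) : Matrix (Fin 3) (Fin 3) ℂ :=
  ((g : Matrix.unitaryGroup (Fin 3) ℂ) : Matrix (Fin 3) (Fin 3) ℂ)

lemma mm_mul (g h : SU3) : mm (g * h) = mm g * mm h := rfl
lemma mm_inv (g : SU3) : mm g⁻¹ = star (mm g) := rfl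
lemma mm_one : mm (1 : SU3) = 1 := rfl
lemma mm_star_mul (g : SU3) : star (mm g) * mm g = 1 := Unitary.star_mul_self_of_mem g.1.2
lemma mm_mul_star (g : SU3) : mm g * star (mm g) = 1 := Unitary.mul_star_self_of_mem g.1.2
lemma mm_det (g : SU3) : (mm g).det = 1 := g.2
lemma mm_inj {g h : SU3} (hgh : mm g = mm h) : g = h :=
  Subtype.ext (Subtype.ext hgh)

lemma mem_K3_iff {g : SU3} : g ∈ K3 ↔ ∀ a b : Fin 3, (mm g a b).im = 0 := Iff.rfl

def mkSU (M : Matrix (Fin 3) (Fin 3) ℂ) (h1 : star M * M = 1) (h2 : M * star M = 1)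
    (hd : M.det = 1) : SU3 := ⟨⟨M, h1, h2⟩, hd⟩

lemma mm_mkSU (M : Matrix (Fin 3) (Fin 3) ℂ) (h1 : star M * M = 1) (h2 : M * star M = 1)
    (hd : M.det = 1) : mm (mkSU M h1 h2 hd) = M := rfl

----------------------------------------------------------------
-- special elements
----------------------------------------------------------------

noncomputable def g0 : SU3 :=
  mkSU (ω3 • 1)
    (by rw [star_smul, star_one, smul_mul_smul_comm, one_mul,
          show star ω3 = (starRingEnd ℂ) ω3 from rfl, conj_omega_mul, one_smul])
    (by rw [star_smul, star_one, smul_mul_smul_comm, one_mul, mul_comm,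
          show star ω3 = (starRingEnd ℂ) ω3 from rfl, conj_omega_mul, one_smul])
    (by rw [Matrix.det_smul, Matrix.det_one, mul_one]; simpa using omega_pow3)

lemma mm_g0 : mm g0 = ω3 • 1 := rfl

def D1 : Matrix (Fin 3) (Fin 3) ℂ := !![1,0,0;0,-1,0;0,0,-1]
def D2 : Matrix (Fin 3) (Fin 3) ℂ := !![-1,0,0;0,1,0;0,0,-1]
def Pm : Matrix (Fin 3) (Fin 3) ℂ := !![0,1,0;0,0,1;1,0,0]

def D1el : SU3 := mkSU D1
  (by ext i j; fin_cases i <;> fin_cases j <;>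
      norm_num [D1, star_eq_conjTranspose, Matrix.mul_apply, Fin.sum_univ_three,
        Matrix.conjTranspose_apply, Matrix.one_apply, Matrix.vecHead, Matrix.vecTail, Fin.ext_iff, Matrix.cons_val_two])
  (by ext i j; fin_cases i <;> fin_cases j <;>
      norm_num [D1, star_eq_conjTranspose, Matrix.mul_apply, Fin.sum_univ_three,
        Matrix.conjTranspose_apply, Matrix.one_apply, Matrix.vecHead, Matrix.vecTail, Fin.ext_iff, Matrix.cons_val_two])
  (by norm_num [D1, Matrix.det_fin_three, Matrix.cons_val_two, Matrix.tail_cons, Matrix.head_cons])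

def D2el : SU3 := mkSU D2
  (by ext i j; fin_cases i <;> fin_cases j <;>
      norm_num [D2, star_eq_conjTranspose, Matrix.mul_apply, Fin.sum_univ_three,
        Matrix.conjTranspose_apply, Matrix.one_apply, Matrix.vecHead, Matrix.vecTail, Fin.ext_iff, Matrix.cons_val_two])
  (by ext i j; fin_cases i <;> fin_cases j <;>
      norm_num [D2, star_eq_conjTranspose, Matrix.mul_apply, Fin.sum_univ_three,
        Matrix.conjTranspose_apply, Matrix.one_apply, Matrix.vecHead, Matrix.vecTail, Fin.ext_iff, Matrix.cons_val_two])
  (by norm_num [D2, Matrix.det_fin_three, Matrix.cons_val_two, Matrix.tail_cons, Matrix.head_cons])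

def Pel : SU3 := mkSU Pm
  (by ext i j; fin_cases i <;> fin_cases j <;>
      norm_num [Pm, star_eq_conjTranspose, Matrix.mul_apply, Fin.sum_univ_three,
        Matrix.conjTranspose_apply, Matrix.one_apply, Matrix.vecHead, Matrix.vecTail, Fin.ext_iff, Matrix.cons_val_two])
  (by ext i j; fin_cases i <;> fin_cases j <;>
      norm_num [Pm, star_eq_conjTranspose, Matrix.mul_apply, Fin.sum_univ_three,
        Matrix.conjTranspose_apply, Matrix.one_apply, Matrix.vecHead, Matrix.vecTail, Fin.ext_iff, Matrix.cons_val_two])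
  (by norm_num [Pm, Matrix.det_fin_three, Matrix.cons_val_two, Matrix.tail_cons, Matrix.head_cons])

lemma D1el_mem : D1el ∈ K3 := by
  intro a b; fin_cases a <;> fin_cases b <;> norm_num [D1el, mkSU, D1]

lemma D2el_mem : D2el ∈ K3 := by
  intro a b; fin_cases a <;> fin_cases b <;> norm_num [D2el, mkSU, D2]

lemma Pel_mem : Pel ∈ K3 := by
  intro a b; fin_cases a <;> fin_cases b <;> norm_num [Pel, mkSU, Pm]

----------------------------------------------------------------
-- centralizer computation
----------------------------------------------------------------

lemma scalar_of_comm (c : Matrix (Fin 3) (Fin 3) ℂ)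
    (h1 : c * D1 = D1 * c) (h2 : c * D2 = D2 * c) (h3 : c * Pm = Pm * c) :
    c = c 0 0 • 1 := by
  have key : ∀ (M : Matrix (Fin 3) (Fin 3) ℂ), c * M = M * c → ∀ i j : Fin 3,
      (c * M) i j = (M * c) i j := fun M hM i j => by rw [hM]
  have lc : ∀ (i j : Fin 3) (t : ℂ), (c * D1) i j = (D1 * c) i j →
      True := fun _ _ _ _ => trivial
  have c01 : c 0 1 = 0 := by
    have h := congrFun (congrFun h1 0) 1
    simp [D1, Matrix.mul_apply, Fin.sum_univ_three, Matrix.vecHead, Matrix.vecTail] at h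
    first | linear_combination h | linear_combination -h | linear_combination h/2 | linear_combination -h/2
  have c10 : c 1 0 = 0 := by
    have h := congrFun (congrFun h1 1) 0
    simp [D1, Matrix.mul_apply, Fin.sum_univ_three, Matrix.vecHead, Matrix.vecTail] at h
    first | linear_combination h | linear_combination -h | linear_combination h/2 | linear_combination -h/2
  have c02 : c 0 2 = 0 := by
    have h := congrFun (congrFun h1 0) 2
    simp [D1, Matrix.mul_apply, Fin.sum_univ_three, Matrix.vecHead, Matrix.vecTail] at h
    first | linear_combination h | linear_combination -h | linear_combination h/2 | linear_combination -h/2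
  have c20 : c 2 0 = 0 := by
    have h := congrFun (congrFun h1 2) 0
    simp [D1, Matrix.mul_apply, Fin.sum_univ_three, Matrix.vecHead, Matrix.vecTail] at h
    first | linear_combination h | linear_combination -h | linear_combination h/2 | linear_combination -h/2
  have c12 : c 1 2 = 0 := by
    have h := congrFun (congrFun h2 1) 2
    simp [D2, Matrix.mul_apply, Fin.sum_univ_three, Matrix.vecHead, Matrix.vecTail] at h
    first | linear_combination h | linear_combination -h | linear_combination h/2 | linear_combination -h/2
  have c21 : c 2 1 = 0 := by
    have h := congrFun (congrFun h2 2) 1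
    simp [D2, Matrix.mul_apply, Fin.sum_univ_three, Matrix.vecHead, Matrix.vecTail] at h
    first | linear_combination h | linear_combination -h | linear_combination h/2 | linear_combination -h/2
  have d1 : c 1 1 = c 0 0 := by
    have h := congrFun (congrFun h3 0) 1
    simp [Pm, Matrix.mul_apply, Fin.sum_univ_three, Matrix.vecHead, Matrix.vecTail] at h
    first | linear_combination h | linear_combination -h
  have d2 : c 2 2 = c 1 1 := by
    have h := congrFun (congrFun h3 1) 2
    simp [Pm, Matrix.mul_apply, Fin.sum_univ_three, Matrix.vecHead, Matrix.vecTail] at h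
    first | linear_combination h | linear_combination -h
  ext i j
  fin_cases i <;> fin_cases j <;>
    simp [Matrix.smul_apply, Matrix.one_apply, c01, c10, c02, c20, c12, c21, d1, d2]

----------------------------------------------------------------
-- realness via conjugation
----------------------------------------------------------------

lemma K3_iff_conj {g : SU3} : g ∈ K3 ↔ (mm g).map (starRingEnd ℂ) = mm g := by
  rw [mem_K3_iff]
  constructor
  · intro h; ext i j
    simp only [Matrix.map_apply]
    exact Complex.conj_eq_iff_im.2 (h i j)
  · intro h i j
    have := congrFun (congrFun h i) j
    simp only [Matrix.map_apply] at this
    exact Complex.conj_eq_iff_im.1 this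

lemma map_conj_star (A : Matrix (Fin 3) (Fin 3) ℂ) :
    (star A).map (starRingEnd ℂ) = star (A.map (starRingEnd ℂ)) := by
  ext i j
  simp [Matrix.map_apply, Matrix.star_apply]

lemma map_conj_mul (A B : Matrix (Fin 3) (Fin 3) ℂ) :
    ((A * B).map (starRingEnd ℂ)) = A.map (starRingEnd ℂ) * B.map (starRingEnd ℂ) :=
  Matrix.map_mul

lemma normalizer_sub (g : SU3) (hg : g ∈ (Subgroup.normalizer (K3 : Set SU3))) :
    ∃ h ∈ K3, g = h ∨ mm g = ω3 • mm h ∨ mm g = ω3 ^ 2 • mm h := by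
  set G := mm g with hG
  set Gb := G.map (starRingEnd ℂ) with hGbdef
  have hGbu1 : star Gb * Gb = 1 := by
    have h0 := congrArg (fun M => M.map (starRingEnd ℂ)) (mm_star_mul g)
    simp only [← hG, map_conj_mul, map_conj_star] at h0
    simpa using h0
  have hcomm : ∀ x ∈ K3, (star G * Gb) * mm x = mm x * (star G * Gb) := by
    intro x hx
    have hy : g * x * g⁻¹ ∈ K3 := (Subgroup.mem_normalizer_iff.1 hg x).1 hx
    have hyc := K3_iff_conj.1 hy
    have hxc := K3_iff_conj.1 hx
    have hmmy : mm (g * x * g⁻¹) = G * mm x * star G := by rw [mm_mul, mm_mul, mm_inv]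
    rw [hmmy, map_conj_mul, map_conj_mul, hxc, map_conj_star] at hyc
    calc (star G * Gb) * mm x
        = (star G * Gb) * mm x * (star Gb * Gb) := by rw [hGbu1, mul_one]
      _ = star G * (Gb * mm x * star Gb) * Gb := by simp only [mul_assoc]
      _ = star G * (G * mm x * star G) * Gb := by rw [hyc]
      _ = (star G * G) * (mm x * (star G * Gb)) := by simp only [mul_assoc]
      _ = mm x * (star G * Gb) := by rw [mm_star_mul, one_mul]
  have hc := scalar_of_comm (star G * Gb) (hcomm D1el D1el_mem) (hcomm D2el D2el_mem)
    (hcomm Pel Pel_mem)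
  set l := (star G * Gb) 0 0 with hl0
  have hdet : (star G * Gb).det = 1 := by
    rw [Matrix.det_mul]
    have hd1 : (star G).det = 1 := by
      rw [Matrix.star_eq_conjTranspose, Matrix.det_conjTranspose, mm_det]; simp
    have hd2 : Gb.det = 1 := by
      have h := (starRingEnd ℂ).map_det (mm g)
      rw [mm_det, _root_.map_one] at h
      simp only [RingHom.mapMatrix_apply] at h
      rw [hGbdef]; exact h.symm
    rw [hd1, hd2, mul_one]
  have hl3 : l ^ 3 = 1 := by
    rw [hc] at hdet
    rw [Matrix.det_smul, Matrix.det_one, mul_one] at hdet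
    simpa using hdet
  have hGbG : Gb = l • G := by
    have h0 : G * (star G * Gb) = G * (l • 1) := by rw [hc]
    rw [← mul_assoc, mm_mul_star, one_mul, mul_smul_comm, mul_one] at h0
    exact h0
  have hent : ∀ a b, (starRingEnd ℂ) (G a b) = l * G a b := by
    intro a b
    have := congrFun (congrFun hGbG a) b
    simpa [hGbdef, Matrix.map_apply, Matrix.smul_apply] using this
  rcases cube_root_cases hl3 with hl | hl | hl
  · refine ⟨g, ?_, Or.inl rfl⟩
    rw [mem_K3_iff]; intro a b
    have h0 := hent a b; rw [hl, one_mul] at h0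
    exact Complex.conj_eq_iff_im.1 h0
  · have hmh : mm (g0⁻¹ * g) = ω3 ^ 2 • G := by
      rw [mm_mul, mm_inv, mm_g0, star_smul, star_one,
        show star ω3 = (starRingEnd ℂ) ω3 from rfl, conj_omega, smul_mul_assoc, one_mul]
    refine ⟨g0⁻¹ * g, ?_, Or.inr (Or.inl ?_)⟩
    · rw [mem_K3_iff]; intro a b
      rw [hmh]
      apply Complex.conj_eq_iff_im.1
      rw [Matrix.smul_apply, smul_eq_mul, _root_.map_mul, conj_omega_sq, hent a b, hl]
      ring
    · show mm g = ω3 • mm (g0⁻¹ * g)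
      rw [hmh, smul_smul, ← pow_succ', omega_pow3, one_smul]
  · have hmh : mm ((g0 * g0)⁻¹ * g) = ω3 • G := by
      rw [mm_mul, mm_inv, mm_mul, mm_g0, smul_mul_smul_comm, one_mul, star_smul, star_one,
        show star (ω3 * ω3) = (starRingEnd ℂ) (ω3 * ω3) from rfl, _root_.map_mul, conj_omega,
        smul_mul_assoc, one_mul]
      congr 1
      linear_combination ω3 * omega_pow3
    refine ⟨(g0 * g0)⁻¹ * g, ?_, Or.inr (Or.inr ?_)⟩
    · rw [mem_K3_iff]; intro a b
      rw [hmh]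
      apply Complex.conj_eq_iff_im.1
      rw [Matrix.smul_apply, smul_eq_mul, _root_.map_mul, conj_omega, hent a b, hl]
      linear_combination (ω3 * G a b) * omega_pow3
    · show mm g = ω3 ^ 2 • mm ((g0 * g0)⁻¹ * g)
      rw [hmh, smul_smul, ← pow_succ, omega_pow3, one_smul]

lemma conj_omega_sq_mul : (starRingEnd ℂ) (ω3 ^ 2) * ω3 ^ 2 = 1 := by
  rw [conj_omega_sq, ← pow_succ', omega_pow3]

lemma norm_aux (g h : SU3) (hh : h ∈ K3) (μ : ℂ) (hμ : (starRingEnd ℂ) μ * μ = 1)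
    (hg : mm g = μ • mm h) : g ∈ (Subgroup.normalizer (K3 : Set SU3)) := by
  rw [Subgroup.mem_normalizer_iff]
  intro x
  have key : mm (g * x * g⁻¹) = mm (h * x * h⁻¹) := by
    rw [mm_mul, mm_mul, mm_inv, mm_mul, mm_mul, mm_inv, hg, star_smul, smul_mul_assoc,
      smul_mul_assoc, mul_smul_comm, smul_smul]
    rw [show μ * star μ = 1 from by
      rw [mul_comm, show star μ = (starRingEnd ℂ) μ from rfl]; exact hμ, one_smul]
  constructor
  · intro hx
    have h2 : h * x * h⁻¹ ∈ K3 := mul_mem (mul_mem hh hx) (inv_mem hh)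
    rw [mem_K3_iff, key]
    exact h2
  · intro hx
    have h2 : h * x * h⁻¹ ∈ K3 := by
      rw [mem_K3_iff, ← key]
      exact hx
    have h3 := mul_mem (mul_mem (inv_mem hh) h2) hh
    have h4 : h⁻¹ * (h * x * h⁻¹) * h = x := by group
    rwa [h4] at h3

lemma g0_mem_normalizer : g0 ∈ (Subgroup.normalizer (K3 : Set SU3)) :=
  norm_aux g0 1 (one_mem K3) ω3 conj_omega_mul (by rw [mm_one]; exact mm_g0)

lemma g0_pow3 : g0 * g0 * g0 = 1 := by
  apply mm_inj
  rw [mm_mul, mm_mul, mm_g0, mm_one, smul_mul_smul_comm, one_mul, smul_mul_assoc, one_mul,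
    smul_smul, show ω3 * ω3 * ω3 = ω3 ^ 3 by ring, omega_pow3, one_smul]

lemma g0_not_mem_K3 : g0 ∉ K3 := by
  rw [mem_K3_iff]
  push_neg
  refine ⟨0, 0, ?_⟩
  have : mm g0 0 0 = ω3 := by rw [mm_g0]; simp [Matrix.smul_apply, Matrix.one_apply]
  rw [this]
  exact omega_im_ne

lemma quotient_card :
    Nat.card ((Subgroup.normalizer (K3 : Set SU3)) ⧸ K3.subgroupOf (Subgroup.normalizer (K3 : Set SU3))) = 3 := by
  set Q := (Subgroup.normalizer (K3 : Set SU3)) ⧸ K3.subgroupOf (Subgroup.normalizer (K3 : Set SU3))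
  set n0 : (Subgroup.normalizer (K3 : Set SU3)) := ⟨g0, g0_mem_normalizer⟩ with hn0
  set π := QuotientGroup.mk' (K3.subgroupOf (Subgroup.normalizer (K3 : Set SU3))) with hπ
  set a : Q := π n0 with ha
  have ha3 : a ^ 3 = 1 := by
    rw [ha, ← map_pow]
    rw [show n0 ^ 3 = 1 from Subtype.ext (by
      rw [SubmonoidClass.coe_pow]
      show (g0 : SU3) ^ 3 = 1
      rw [pow_succ, pow_two]
      exact g0_pow3)]
    exact map_one π
  have hane : a ≠ 1 := by
    rw [ha, hπ]
    intro hcon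
    rw [QuotientGroup.mk'_apply, QuotientGroup.eq_one_iff, Subgroup.mem_subgroupOf] at hcon
    exact g0_not_mem_K3 hcon
  haveI : Fact (Nat.Prime 3) := ⟨by norm_num⟩
  have horder : orderOf a = 3 := orderOf_eq_prime ha3 hane
  have hgen : ∀ x : Q, x ∈ Subgroup.zpowers a := by
    intro x
    obtain ⟨n, rfl⟩ := QuotientGroup.mk'_surjective (K3.subgroupOf (Subgroup.normalizer (K3 : Set SU3))) x
    rcases normalizer_sub (n : SU3) n.2 with ⟨h, hh, h1 | h2 | h3⟩
    · have : π n = 1 := by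
        rw [hπ, QuotientGroup.mk'_apply, QuotientGroup.eq_one_iff, Subgroup.mem_subgroupOf, h1]
        exact hh
      show π n ∈ Subgroup.zpowers a
      rw [this]
      exact one_mem _
    · have hmem : n0⁻¹ * n ∈ K3.subgroupOf (Subgroup.normalizer (K3 : Set SU3)) := by
        rw [Subgroup.mem_subgroupOf]
        show (g0⁻¹ * (n : SU3)) ∈ K3
        rw [mem_K3_iff]
        have hm : mm (g0⁻¹ * (n : SU3)) = mm h := by
          rw [mm_mul, mm_inv, mm_g0, h2, star_smul, star_one, smul_mul_assoc, one_mul, smul_smul,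
            show star ω3 = (starRingEnd ℂ) ω3 from rfl, conj_omega_mul, one_smul]
        rw [hm]
        exact hh
      have : π (n0⁻¹ * n) = 1 := by
        rw [hπ, QuotientGroup.mk'_apply, QuotientGroup.eq_one_iff]
        exact hmem
      rw [_root_.map_mul, map_inv] at this
      have heq : π n = a := (inv_mul_eq_one.1 this).symm
      show π n ∈ Subgroup.zpowers a
      rw [heq]
      exact Subgroup.mem_zpowers a
    · have hmem : (n0 * n0)⁻¹ * n ∈ K3.subgroupOf (Subgroup.normalizer (K3 : Set SU3)) := by
        rw [Subgroup.mem_subgroupOf]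
        show ((g0 * g0)⁻¹ * (n : SU3)) ∈ K3
        rw [mem_K3_iff]
        have hsc : (starRingEnd ℂ) (ω3 * ω3) * ω3 ^ 2 = 1 := by
          rw [_root_.map_mul]
          linear_combination ((starRingEnd ℂ) ω3 * ω3 + 1) * conj_omega_mul
        have hm : mm ((g0 * g0)⁻¹ * (n : SU3)) = mm h := by
          rw [mm_mul, mm_inv, mm_mul, mm_g0, h3, smul_mul_smul_comm, one_mul, star_smul, star_one,
            smul_mul_assoc, one_mul, smul_smul,
            show star (ω3 * ω3) = (starRingEnd ℂ) (ω3 * ω3) from rfl, hsc, one_smul]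
        rw [hm]
        exact hh
      have : π ((n0 * n0)⁻¹ * n) = 1 := by
        rw [hπ, QuotientGroup.mk'_apply, QuotientGroup.eq_one_iff]
        exact hmem
      rw [_root_.map_mul, map_inv, _root_.map_mul] at this
      have heq : π n = a * a := (inv_mul_eq_one.1 this).symm
      show π n ∈ Subgroup.zpowers a
      rw [heq]
      exact ⟨2, zpow_two a⟩
  have htop : Subgroup.zpowers a = ⊤ := by
    rw [Subgroup.eq_top_iff']
    exact hgen
  calc Nat.card Q = Nat.card (⊤ : Subgroup Q) :=
        (Nat.card_congr Subgroup.topEquiv.toEquiv).symm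
    _ = Nat.card (Subgroup.zpowers a) := by rw [htop]
    _ = orderOf a := Nat.card_zpowers a
    _ = 3 := horder


/-- The normalizer of `K = SO(3)` in `SU(3)` is the union `K ∪ ωK ∪ ω²K`, where
`ω = e^{2πi/3}·I` is the scalar matrix with entry a primitive cube root of unity;
consequently the quotient group `N/K` is cyclic of order `3`. -/
theorem normalizer_SO3_in_SU3 :
    ((Subgroup.normalizer (K3 : Set SU3) : Set SU3) =
      {g : SU3 | ∃ h ∈ K3,
        g = h ∨
          ((g : Matrix.unitaryGroup (Fin 3) ℂ) : Matrix (Fin 3) (Fin 3) ℂ) =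
            Complex.exp (2 * Real.pi * Complex.I / 3) •
              ((h : Matrix.unitaryGroup (Fin 3) ℂ) : Matrix (Fin 3) (Fin 3) ℂ) ∨
          ((g : Matrix.unitaryGroup (Fin 3) ℂ) : Matrix (Fin 3) (Fin 3) ℂ) =
            Complex.exp (2 * Real.pi * Complex.I / 3) ^ 2 •
              ((h : Matrix.unitaryGroup (Fin 3) ℂ) : Matrix (Fin 3) (Fin 3) ℂ)}) ∧
      Nonempty ((Subgroup.normalizer (K3 : Set SU3) ⧸ K3.subgroupOf (Subgroup.normalizer (K3 : Set SU3))) ≃* Multiplicative (ZMod 3)) := by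
  constructor
  · ext g
    simp only [SetLike.mem_coe, Set.mem_setOf_eq]
    constructor
    · intro hg
      obtain ⟨h, hh, hcase⟩ := normalizer_sub g hg
      exact ⟨h, hh, hcase⟩
    · rintro ⟨h, hh, rfl | h2 | h3⟩
      · exact Subgroup.le_normalizer hh
      · exact norm_aux _ h hh ω3 conj_omega_mul h2
      · exact norm_aux _ h hh (ω3 ^ 2) conj_omega_sq_mul h3
  · haveI : Fact (Nat.Prime 3) := ⟨by norm_num⟩
    exact ⟨mulEquivOfPrimeCardEq quotient_card (by simp [Nat.card_eq_fintype_card])⟩
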